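/- In the Yangian Y(gl_n), the quantum minors are skew-symmetric in their upper indices: t^{a_{σ(1)}...a_{σ(k)}}_{b_1...b_k}(u) = sgn(σ)·t^{a_1...a_k}_{b_1...b_k}(u) for any permutation σ ∈ S_k, where t^{a_1...a_k}_{b_1...b_k}(u) = Σ_{σ∈S_k} (-1)^σ t_{a_{σ(1)}b_1}(u)·t_{a_{σ(2)}b_2}(u-1)···t_{a_{σ(k)}b_k}(u-k+1). -/

import Mathlib

open scoped BigOperators

abbrev YFA (n : ℕ) := FreeAlgebra ℂ (Fin n × Fin n × ℕ)

noncomputable def tFree (n : ℕ) (i j : Fin n) (r : ℕ) : YFA n :=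
  if r = 0 then (if i = j then 1 else 0) else FreeAlgebra.ι ℂ (i, j, r)

inductive YangianRel (n : ℕ) : YFA n → YFA n → Prop
  | rel (i j k l : Fin n) (r s : ℕ) :
      YangianRel n
        (⁅tFree n i j (r+1), tFree n k l s⁆ - ⁅tFree n i j r, tFree n k l (s+1)⁆)
        (tFree n k j r * tFree n i l s - tFree n k j s * tFree n i l r)

abbrev Yangian (n : ℕ) := RingQuot (YangianRel n)

noncomputable def t (n : ℕ) (i j : Fin n) (r : ℕ) : Yangian n :=
  RingQuot.mkAlgHom ℂ (YangianRel n) (tFree n i j r)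

noncomputable def shiftVar (n : ℕ) (c : ℕ) : PowerSeries (Yangian n) :=
  PowerSeries.X * PowerSeries.invOfUnit (1 - (c : Yangian n) • PowerSeries.X) 1

noncomputable def tSeries (n : ℕ) (i j : Fin n) (c : ℕ) : PowerSeries (Yangian n) :=
  PowerSeries.mk fun N =>
    ∑ r ∈ Finset.range (N + 1), t n i j r * PowerSeries.coeff N ((shiftVar n c) ^ r)

noncomputable def qminor (n k : ℕ) (a b : Fin k → Fin n) : PowerSeries (Yangian n) :=
  ∑ σ : Equiv.Perm (Fin k),
    ((Equiv.Perm.sign σ : ℤ) : ℤ) •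
      (List.ofFn fun p : Fin k => tSeries n (a (σ p)) (b p) (p : ℕ)).prod

/-- quantum minors are skew-symmetric in their upper indices:
`t^{a_{σ(1)}…a_{σ(k)}}_{b_1…b_k}(u) = sgn(σ)·t^{a_1…a_k}_{b_1…b_k}(u)`. -/
theorem qminor_skew_symmetric_upper (n k : ℕ) (a b : Fin k → Fin n)
    (σ : Equiv.Perm (Fin k)) :
    qminor n k (a ∘ σ) b = ((Equiv.Perm.sign σ : ℤ) : ℤ) • qminor n k a b := by
  unfold qminor
  erw [Finset.smul_sum]
  apply Fintype.sum_equiv (Equiv.mulLeft σ)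
  intro τ
  simp only [Function.comp, Equiv.coe_mulLeft, Equiv.Perm.coe_mul, smul_smul, map_mul,
    Units.val_mul, Int.cast_mul]
  erw [smul_smul]
  congr 1
  have h : ((Equiv.Perm.sign σ : ℤ) : ℤ) * ((Equiv.Perm.sign σ : ℤ) : ℤ) = 1 := by
    rcases Int.units_eq_one_or (Equiv.Perm.sign σ) with h | h <;> simp [h]
  rw [← mul_assoc, h, one_mul]
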